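/- Let R be a commutative ring, S a multiplicative subset of R, and M an R-module of projective dimension at most 1. If M ⊗_R R[S⁻¹] admits a 𝒫₁(R)-cover, then the projective dimension of M ⊗_R R[S⁻¹] as an R-module is at most 1. -/

import Mathlib

universe u

open MulOpposite Function

/-- An `A`-module `M` has projective dimension at most 1, i.e. there is a short exact
sequence `0 → ker g → P → M → 0` with `P` and `ker g` projective. -/
def ProjDimLE1 (A : Type u) [Ring A] (M : Type u) [AddCommGroup M] [Module A M] : Prop :=
  ∃ (P : ModuleCat.{u} A) (g : P →ₗ[A] M), Module.Projective A P ∧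
    Function.Surjective g ∧ Module.Projective A (LinearMap.ker g)

/-- `Ext¹_A(X, Y) = 0`: every short exact sequence `0 → Y → E → X → 0` splits. -/
def Ext1Vanishes (A : Type u) [Ring A] (X Y : Type u) [AddCommGroup X] [Module A X]
    [AddCommGroup Y] [Module A Y] : Prop :=
  ∀ (E : Type u) [AddCommGroup E] [Module A E], ∀ (i : Y →ₗ[A] E) (p : E →ₗ[A] X),
    Function.Injective i → Function.Surjective p → LinearMap.range i = LinearMap.ker p →
    ∃ s : X →ₗ[A] E, p.comp s = LinearMap.id

/-- `φ : P → M` is a `C`-cover of `M`: `P ∈ C`, every map from a module of `C` to `M`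
factors through `φ`, and every endomorphism `e` of `P` with `φ ∘ e = φ` is an automorphism. -/
def IsCover (A : Type u) [Ring A] (C : Set (ModuleCat.{u} A)) (P : ModuleCat.{u} A)
    (M : Type u) [AddCommGroup M] [Module A M] (φ : P →ₗ[A] M) : Prop :=
  P ∈ C ∧
  (∀ P' ∈ C, ∀ ψ : (P' : Type u) →ₗ[A] M, ∃ h : (P' : Type u) →ₗ[A] (P : Type u),
    φ.comp h = ψ) ∧
  (∀ e : (P : Type u) →ₗ[A] (P : Type u), φ.comp e = φ → Function.Bijective e)

/-- The class `C` is covering: every `A`-module admits a `C`-cover. -/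
def IsCoveringClass (A : Type u) [Ring A] (C : Set (ModuleCat.{u} A)) : Prop :=
  ∀ M : ModuleCat.{u} A, ∃ (P : ModuleCat.{u} A) (φ : P →ₗ[A] (M : Type u)),
    IsCover A C P (M : Type u) φ

/-- The class `𝒫₁(A)` of modules of projective dimension at most one. -/
def P1Class (A : Type u) [Ring A] : Set (ModuleCat.{u} A) := {M | ProjDimLE1 A M}

section Aux

variable {R : Type u} [CommRing R]


variable {R : Type u} [CommRing R]

theorem aux_projective_of_split_surj {E B : Type u} [AddCommGroup E] [Module R E]
    [AddCommGroup B] [Module R B] [Module.Projective R B] (p : E →ₗ[R] B) (σ : B →ₗ[R] E)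
    (hpσ : p ∘ₗ σ = LinearMap.id)
    (hker : Module.Projective R (LinearMap.ker p)) : Module.Projective R E := by
  haveI := hker
  exact Module.Projective.of_equiv
    (lequivProdOfRightSplitExact (LinearMap.ker p).injective_subtype
      (Submodule.range_subtype _) hpσ)

theorem aux_schanuel {F₁ F₂ X : Type u} [AddCommGroup F₁] [Module R F₁]
    [AddCommGroup F₂] [Module R F₂] [AddCommGroup X] [Module R X]
    [Module.Projective R F₁] [Module.Projective R F₂]
    (g₁ : F₁ →ₗ[R] X) (g₂ : F₂ →ₗ[R] X) (h₁ : Surjective g₁) (h₂ : Surjective g₂)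
    (hk₂ : Module.Projective R (LinearMap.ker g₂)) :
    Module.Projective R (LinearMap.ker g₁) := by
  set d : F₁ × F₂ →ₗ[R] X := g₁ ∘ₗ LinearMap.fst R F₁ F₂ - g₂ ∘ₗ LinearMap.snd R F₁ F₂ with hd
  have memE : ∀ x : F₁ × F₂, x ∈ LinearMap.ker d ↔ g₁ x.1 = g₂ x.2 := by
    intro x
    simp [hd, LinearMap.mem_ker, sub_eq_zero]
  set E : Submodule R (F₁ × F₂) := LinearMap.ker d with hE
  let π₁ : E →ₗ[R] F₁ := LinearMap.fst R F₁ F₂ ∘ₗ E.subtype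
  let π₂ : E →ₗ[R] F₂ := LinearMap.snd R F₁ F₂ ∘ₗ E.subtype
  have hπ₁ : Surjective π₁ := by
    intro a
    obtain ⟨b, hb⟩ := h₂ (g₁ a)
    exact ⟨⟨(a, b), (memE _).2 hb.symm⟩, rfl⟩
  have hπ₂ : Surjective π₂ := by
    intro b
    obtain ⟨a, ha⟩ := h₁ (g₂ b)
    exact ⟨⟨(a, b), (memE _).2 ha⟩, rfl⟩
  have hkπ₁ : Module.Projective R (LinearMap.ker π₁) := by
    haveI := hk₂
    have hmem1 : ∀ x : LinearMap.ker π₁, g₂ (π₂ x.1) = 0 := by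
      rintro ⟨x, hx⟩
      have h1 : g₁ x.1.1 = g₂ x.1.2 := (memE _).1 x.2
      have h2 : x.1.1 = 0 := hx
      simpa [π₂, h2] using h1.symm.trans (by rw [h2]; simp)
    have hmem2 : ∀ b : LinearMap.ker g₂, ((0 : F₁), b.1) ∈ E := by
      intro b
      exact (memE _).2 (by simp [b.2])
    have hmem3 : ∀ b : LinearMap.ker g₂,
        (⟨((0 : F₁), b.1), hmem2 b⟩ : E) ∈ LinearMap.ker π₁ := by
      intro b; simp [π₁, LinearMap.mem_ker]
    refine Module.Projective.of_split (M := LinearMap.ker g₂)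
      (LinearMap.codRestrict (LinearMap.ker g₂)
        (π₂ ∘ₗ (LinearMap.ker π₁).subtype) hmem1)
      ({ toFun := fun b => ⟨⟨((0 : F₁), b.1), hmem2 b⟩, hmem3 b⟩
         map_add' := by intros; ext <;> simp
         map_smul' := by intros; ext <;> simp }) ?_
    refine LinearMap.ext fun x => Subtype.ext (Subtype.ext (Prod.ext ?_ ?_)) <;>
      · have h2 : (x.1 : F₁ × F₂).1 = 0 := x.2
        simp [π₂, h2.symm] <;> rfl
  obtain ⟨σ₁, hσ₁⟩ := Module.projective_lifting_property π₁ LinearMap.id hπ₁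
  have hEproj : Module.Projective R E := aux_projective_of_split_surj π₁ σ₁ hσ₁ hkπ₁
  obtain ⟨σ₂, hσ₂⟩ := Module.projective_lifting_property π₂ LinearMap.id hπ₂
  haveI := hEproj
  have hmem4 : ∀ a : LinearMap.ker g₁, ((a.1, (0 : F₂))) ∈ E :=
    fun a => (memE _).2 (by simp [a.2])
  have hmem5 : ∀ x : E, g₁ (π₁ ((((LinearMap.id : ↥E →ₗ[R] ↥E) - σ₂ ∘ₗ π₂)) x)) = 0 := by
    intro x
    set y : E := (((LinearMap.id : ↥E →ₗ[R] ↥E) - σ₂ ∘ₗ π₂)) x with hy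
    have hy2 : π₂ y = 0 := by
      have := LinearMap.congr_fun hσ₂ (π₂ x)
      simp only [LinearMap.comp_apply, LinearMap.id_apply] at this
      simp [hy, map_sub, this]
    have h1 : g₁ y.1.1 = g₂ y.1.2 := (memE _).1 y.2
    have h2 : y.1.2 = 0 := hy2
    simpa [π₁, h2] using h1.trans (by rw [h2]; simp)
  refine Module.Projective.of_split (M := E)
    (LinearMap.codRestrict E (LinearMap.inl R F₁ F₂ ∘ₗ (LinearMap.ker g₁).subtype)
      (fun a => hmem4 a))
    (LinearMap.codRestrict (LinearMap.ker g₁)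
      (π₁ ∘ₗ (((LinearMap.id : ↥E →ₗ[R] ↥E) - σ₂ ∘ₗ π₂))) hmem5) ?_
  ext a
  have h0 : π₂ (LinearMap.codRestrict E
      (LinearMap.inl R F₁ F₂ ∘ₗ (LinearMap.ker g₁).subtype) (fun a => hmem4 a) a) = 0 := by
    simp [π₂] <;> rfl
  change (a : F₁) - (σ₂ (π₂ _)).1.1 = _
  simp [h0]


theorem aux_projDimLE1_of_retract {R : Type u} [CommRing R] {X Y : Type u} [AddCommGroup X] [Module R X]
    [AddCommGroup Y] [Module R Y] (r : Y →ₗ[R] X) (s : X →ₗ[R] Y)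
    (hrs : r ∘ₗ s = LinearMap.id) (hY : ProjDimLE1 R Y) : ProjDimLE1 R X := by
  obtain ⟨F, g, hF, hg, hQ⟩ := hY
  haveI := hF
  set gX : (X →₀ R) →ₗ[R] X := Finsupp.linearCombination R _root_.id with hgXdef
  have hgX : Surjective gX := fun x => ⟨Finsupp.single x 1, by simp [hgXdef]⟩
  set X' : Submodule R Y := LinearMap.ker r with hX'
  set g' : (X' →₀ R) →ₗ[R] X' := Finsupp.linearCombination R _root_.id with hg'def
  have hg' : Surjective g' := fun x => ⟨Finsupp.single x 1, by simp [hg'def]⟩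
  set β : ((X →₀ R) × (X' →₀ R)) →ₗ[R] Y :=
    s ∘ₗ gX ∘ₗ LinearMap.fst R _ _ + X'.subtype ∘ₗ g' ∘ₗ LinearMap.snd R _ _ with hβdef
  have hrs' : ∀ x : X, r (s x) = x := fun x => LinearMap.congr_fun hrs x
  have hβ : Surjective β := by
    intro y
    obtain ⟨a, ha⟩ := hgX (r y)
    have hy : y - s (r y) ∈ X' := by
      simp [hX', LinearMap.mem_ker, map_sub, hrs']
    obtain ⟨b, hb⟩ := hg' ⟨y - s (r y), hy⟩
    refine ⟨(a, b), ?_⟩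
    have hb' : (g' b : Y) = y - s (r y) := by rw [hb]
    simp [hβdef, ha, hb', sub_add_cancel]
  have hkβ : Module.Projective R (LinearMap.ker β) := aux_schanuel β g hβ hg hQ
  have hmem1 : ∀ a : LinearMap.ker gX, ((a.1, (0 : X' →₀ R))) ∈ LinearMap.ker β := by
    intro a
    have : gX a.1 = 0 := a.2
    simp [LinearMap.mem_ker, hβdef, this]
  have hmem2 : ∀ x : LinearMap.ker β, gX (x.1.1) = 0 := by
    rintro ⟨x, hx⟩
    have hx' : s (gX x.1) + (X'.subtype (g' x.2)) = 0 := hx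
    have := congrArg r hx'
    simp only [map_add, hrs'] at this
    have h0 : r (X'.subtype (g' x.2)) = 0 := (g' x.2).2
    simpa [h0] using this
  have hkgX : Module.Projective R (LinearMap.ker gX) := by
    haveI := hkβ
    refine Module.Projective.of_split (M := LinearMap.ker β)
      (LinearMap.codRestrict (LinearMap.ker β)
        ((LinearMap.inl R (X →₀ R) (X' →₀ R)) ∘ₗ (LinearMap.ker gX).subtype) hmem1)
      (LinearMap.codRestrict (LinearMap.ker gX)
        ((LinearMap.fst R (X →₀ R) (X' →₀ R)) ∘ₗ (LinearMap.ker β).subtype) hmem2) ?_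
    ext a
    simp <;> rfl
  exact ⟨ModuleCat.of R (X →₀ R), gX, (inferInstance : Module.Projective R (X →₀ R)), hgX, hkgX⟩


end Aux

/-- **Lemma 5.2(ii).** Let `R` be a commutative ring, `S` a multiplicative subset of `R`
and `M` an `R`-module of projective dimension at most 1. If `M ⊗_R R[S⁻¹]` has a
`𝒫₁(R)`-cover, then `p.dim_R (M ⊗_R R[S⁻¹]) ≤ 1`. -/
theorem pd_le_one_of_localized_module_has_P1_cover (R : Type u) [CommRing R]
    (S : Submonoid R) (M : Type u) [AddCommGroup M] [Module R M]
    (hM : ProjDimLE1 R M)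
    (h : ∃ (P : ModuleCat.{u} R) (φ : (P : Type u) →ₗ[R] TensorProduct R M (Localization S)),
      IsCover R (P1Class R) P (TensorProduct R M (Localization S)) φ) :
    ProjDimLE1 R (TensorProduct R M (Localization S)) := by
  obtain ⟨P, φ, hP1, hpre, hauto⟩ := h
  let v : M →ₗ[R] (TensorProduct R (Localization S) M) :=
    TensorProduct.mk R (Localization S) M 1
  haveI hv : IsLocalizedModule S v :=
    (isLocalizedModule_iff_isBaseChange S (Localization S) v).mpr
      (TensorProduct.isBaseChange (R := R) (S := Localization S) (M := M))
  let e : TensorProduct R (Localization S) M ≃ₗ[R] TensorProduct R M (Localization S) :=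
    TensorProduct.comm R (Localization S) M
  let u : M →ₗ[R] TensorProduct R M (Localization S) := e.toLinearMap ∘ₗ v
  haveI hu : IsLocalizedModule S u := IsLocalizedModule.of_linearEquiv S v (e := e)
  have hNu : ∀ s : S, IsUnit (algebraMap R (Module.End R (TensorProduct R M (Localization S))) s) :=
    fun s => IsLocalizedModule.map_units u s
  obtain ⟨f, hf⟩ := hpre (ModuleCat.of R M) hM u
  have hPu : ∀ s : S, IsUnit (algebraMap R (Module.End R (P : Type u)) (s : R)) := by
    intro s
    obtain ⟨gs, hgs⟩ := hpre P hP1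
      ((↑(hNu s).unit⁻¹ : Module.End R (TensorProduct R M (Localization S))) ∘ₗ φ)
    have hgs' : ∀ x : (P : Type u), φ (gs x) =
        (↑(hNu s).unit⁻¹ : Module.End R (TensorProduct R M (Localization S))) (φ x) :=
      fun x => LinearMap.congr_fun hgs x
    have hinv : ∀ y : TensorProduct R M (Localization S), (s : R) • ((↑(hNu s).unit⁻¹ :
        Module.End R (TensorProduct R M (Localization S))) y) = y := by
      intro y
      have := Module.End.isUnit_apply_inv_apply_of_isUnit (hNu s) y
      simpa [Module.algebraMap_end_apply] using this
    have key1 : φ.comp ((s : R) • gs) = φ := by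
      ext x
      simp [LinearMap.smul_apply, map_smul, hgs', hinv]
    have key2 : φ.comp (gs ∘ₗ ((s : R) • (LinearMap.id : (P : Type u) →ₗ[R] (P : Type u)))) = φ := by
      ext x
      simp [hgs', map_smul, hinv]
    have hb1 : Function.Bijective ((s : R) • gs) := hauto _ key1
    have hb2 : Function.Bijective
        (gs ∘ₗ ((s : R) • (LinearMap.id : (P : Type u) →ₗ[R] (P : Type u)))) := hauto _ key2
    rw [Module.End.isUnit_iff]
    constructor
    · intro x y hxy
      have hxy' : (s : R) • x = (s : R) • y := by
        simpa only [Module.algebraMap_end_apply] using hxy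
      exact hb2.1 (by simp [hxy'])
    · intro y
      obtain ⟨x, hx⟩ := hb1.2 y
      exact ⟨gs x, by simpa [Module.algebraMap_end_apply] using hx⟩
  have hsec : φ ∘ₗ (IsLocalizedModule.lift S u f hPu) = LinearMap.id := by
    have h1 : (φ ∘ₗ (IsLocalizedModule.lift S u f hPu)) ∘ₗ u = u := by
      rw [LinearMap.comp_assoc, IsLocalizedModule.lift_comp S u f hPu, hf]
    have h2 := IsLocalizedModule.lift_unique S u u hNu
      (φ ∘ₗ (IsLocalizedModule.lift S u f hPu)) h1
    have h3 := IsLocalizedModule.lift_unique S u u hNu LinearMap.id (by simp)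
    exact h2.symm.trans h3
  exact aux_projDimLE1_of_retract φ (IsLocalizedModule.lift S u f hPu) hsec hP1
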